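/- If store operations never install a value equal to the current value of Z, then it is impossible for two consecutive successful updates to Z to both leave Z.value equal to the same value x; hence if a CAS's compare-exchange on Z fails twice while Z.value is claimed to equal expected throughout, a contradiction arises. -/
import Mathlib


/-- Suppose `Z.value = x` throughout an interval `[s, t]` that contains
two successive successful updates at times `u1 < u2`. Each update is either a
cas-update, which changes `Z.value` (contradicting constancy), or a write-transfer,
which installs a value that the writer checked (at a check time inside the interval and
after the previous update, for the second update) to differ from `Z.value` at the time
of the check. This situation is impossible. -/
theorem no_two_updates_preserving_value {α : Type*} (value : ℕ → α) (x : α)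
    (s t : ℕ)
    (hconst : ∀ u, s ≤ u → u ≤ t → value u = x)
    (u1 u2 : ℕ) (hs1 : s < u1) (h12 : u1 < u2) (h2t : u2 ≤ t)
    (isCas : ℕ → Prop) (installVal : ℕ → α) (checkTime : ℕ → ℕ)
    (hcas1 : isCas u1 → value u1 ≠ value (u1 - 1))
    (hcas2 : isCas u2 → value u2 ≠ value (u2 - 1))
    (htransfer2 : ¬ isCas u2 →
      value u2 = installVal u2 ∧ u1 ≤ checkTime u2 ∧ checkTime u2 ≤ u2 ∧
        installVal u2 ≠ value (checkTime u2)) :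
    False := by
  have h2 : value u2 = x := hconst u2 (by omega) h2t
  have h2' : value (u2 - 1) = x := hconst (u2-1) (by omega) (by omega)
  by_cases hc : isCas u2
  · exact hcas2 hc (h2.trans h2'.symm)
  · obtain ⟨hv, hle, hle2, hne⟩ := htransfer2 hc
    exact hne (by rw [← hv, h2, hconst (checkTime u2) (by omega) (by omega)])
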